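/- arXiv:1404.0093 — 4 statements merged into one kernel-verified Lean document; each statement's English description precedes it below -/
import Mathlib

section
/- Let G be a group and A ⊆ G a nonempty finite symmetric subset containing the identity. If ∑_{x∈G} r_A(x)² = |A|³, where r_A(x) = #{(a₁,a₂) ∈ A × A : a₁a₂ = x}, then A is a subgroup of G. -/
open Pointwise


/-- Equality in the energy bound: if a nonempty finite symmetric set `A`
containing the identity has multiplicative energy exactly `|A|³`, then `A`
is a subgroup. -/
theorem stmt_1 {G : Type*} [Group G] [DecidableEq G] (A : Finset G)
    (hA : A.Nonempty) (h1 : (1 : G) ∈ A) (hsymm : ∀ a ∈ A, a⁻¹ ∈ A)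
    (henergy : ∑ᶠ x : G,
      (((A ×ˢ A).filter fun p => p.1 * p.2 = x).card) ^ 2 = A.card ^ 3) :
    ∃ H : Subgroup G, (A : Set G) = (H : Set G) := by
  set r : G → ℕ := fun x => ((A ×ˢ A).filter fun p => p.1 * p.2 = x).card with hr
  have hre : ∀ x, r x = (A.filter fun a => a⁻¹ * x ∈ A).card := by
    intro x
    apply Finset.card_bij (fun p _ => p.1)
    · rintro ⟨a, b⟩ hp
      simp only [Finset.mem_filter, Finset.mem_product] at hp ⊢
      refine ⟨hp.1.1, ?_⟩
      rw [← hp.2]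
      simpa using hp.1.2
    · rintro ⟨a, b⟩ hp ⟨c, d⟩ hq h
      simp only [Finset.mem_filter, Finset.mem_product] at hp hq
      dsimp at h
      subst h
      have : b = d := mul_left_cancel (hp.2.trans hq.2.symm)
      simp [this]
    · intro a ha
      simp only [Finset.mem_filter] at ha
      exact ⟨(a, a⁻¹ * x), by simp [Finset.mem_filter, ha.1, ha.2], rfl⟩
  have hsupp : (Function.support fun x => r x ^ 2) ⊆ ↑(A * A) := by
    intro x hx
    simp only [Function.mem_support, hr] at hx
    have : ((A ×ˢ A).filter fun p => p.1 * p.2 = x).Nonempty := by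
      rw [← Finset.card_pos]
      exact Nat.pos_of_ne_zero fun h => hx (by simp [h])
    obtain ⟨⟨a, b⟩, hp⟩ := this
    simp only [Finset.mem_filter, Finset.mem_product] at hp
    simp only [Finset.coe_mul, Set.mem_mul]
    exact ⟨a, hp.1.1, b, hp.1.2, hp.2⟩
  have hsum : ∑ᶠ x, r x ^ 2 = ∑ x ∈ A * A, r x ^ 2 :=
    finsum_eq_finset_sum_of_support_subset _ hsupp
  have hfiber : ∑ x ∈ A * A, r x = A.card ^ 2 := by
    rw [hr]
    rw [← Finset.card_eq_sum_card_fiberwise (f := fun p : G × G => p.1 * p.2)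
      (s := A ×ˢ A) (t := A * A) (fun p hp => by
        simp only [Finset.mem_coe, Finset.mem_product] at hp
        exact Finset.mul_mem_mul hp.1 hp.2)]
    rw [Finset.card_product]; ring
  have hle : ∀ x ∈ A * A, r x ^ 2 ≤ A.card * r x := by
    intro x _
    have : r x ≤ A.card := by rw [hre]; exact Finset.card_filter_le _ _
    rw [pow_two]
    exact Nat.mul_le_mul_right _ this
  have hsum2 : ∑ x ∈ A * A, A.card * r x = A.card ^ 3 := by
    rw [← Finset.mul_sum, hfiber]; ring
  have heq : ∀ x ∈ A * A, r x ^ 2 = A.card * r x := by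
    rw [← Finset.sum_eq_sum_iff_of_le hle]
    rw [hsum2, ← hsum]
    exact henergy
  have hrA : ∀ x ∈ A * A, r x = A.card := by
    intro x hx
    have hpos : 0 < r x := by
      obtain ⟨a, ha, b, hb, hab⟩ := Finset.mem_mul.mp hx
      rw [hr]
      apply Finset.card_pos.mpr
      exact ⟨(a, b), by simp [Finset.mem_filter, ha, hb, hab]⟩
    have := heq x hx
    rw [pow_two] at this
    exact Nat.eq_of_mul_eq_mul_right hpos this
  have hmul : ∀ a ∈ A, ∀ b ∈ A, a * b ∈ A := by
    intro a ha b hb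
    have hx : a * b ∈ A * A := Finset.mul_mem_mul ha hb
    have hcard : (A.filter fun c => c⁻¹ * (a * b) ∈ A).card = A.card := by
      rw [← hre]; exact hrA _ hx
    have hfe : (A.filter fun c => c⁻¹ * (a * b) ∈ A) = A :=
      Finset.eq_of_subset_of_card_le (Finset.filter_subset _ _) hcard.ge
    have := hfe ▸ h1
    simpa using (Finset.mem_filter.mp this).2
  exact ⟨{ carrier := ↑A,
           mul_mem' := fun {x y} hx hy => hmul x hx y hy,
           one_mem' := h1,
           inv_mem' := fun {x} hx => hsymm x hx }, rfl⟩
end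

section
/- Let G be a group and u₁, …, u_d ∈ G pairwise commuting elements, and N₁, …, N_d positive integers. Let P = {u₁^{n₁} ⋯ u_d^{n_d} : 0 ≤ nᵢ < Nᵢ} and A = P ∪ P⁻¹. Then A is a 4^d-approximate group: A is symmetric, contains the identity, and A·A ⊆ X·A for some set X with |X| ≤ 4^d. -/
open Pointwise

private def QQ {G : Type*} [Group G] {d : ℕ} (u : Fin d → G) (m : Fin d → ℤ) : G :=
  (List.ofFn fun i => u i ^ m i).prod

private lemma QQ_comm {G : Type*} [Group G] {d : ℕ} (u : Fin (d+1) → G)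
    (hcomm : ∀ i j, Commute (u i) (u j)) (a : ℤ) (m : Fin d → ℤ) :
    Commute (u 0 ^ a) (QQ (fun i => u i.succ) m) := by
  apply Commute.zpow_left
  apply Commute.list_prod_right
  intro x hx
  rw [List.mem_ofFn] at hx
  obtain ⟨i, rfl⟩ := hx
  exact (hcomm 0 i.succ).zpow_right _

private lemma QQ_add {G : Type*} [Group G] : ∀ {d : ℕ} (u : Fin d → G),
    (∀ i j, Commute (u i) (u j)) → ∀ m m' : Fin d → ℤ,
    QQ u (m + m') = QQ u m * QQ u m' := by
  intro d
  induction d with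
  | zero => intro u _ m m'; simp [QQ]
  | succ d ih =>
    intro u hcomm m m'
    have hc' : ∀ i j, Commute ((fun i => u (Fin.succ i)) i) ((fun i => u (Fin.succ i)) j) :=
      fun i j => hcomm i.succ j.succ
    have key := ih (fun i => u i.succ) hc' (fun i => m i.succ) (fun i => m' i.succ)
    simp only [QQ, List.ofFn_succ, List.prod_cons] at *
    have e1 : (fun i : Fin d => (m + m') i.succ) = (fun i => m i.succ) + (fun i => m' i.succ) := rfl
    rw [show (m + m') 0 = m 0 + m' 0 from rfl, zpow_add]
    rw [show ((List.ofFn fun i : Fin d => u i.succ ^ (m + m') i.succ).prod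
        = (List.ofFn fun i : Fin d => u i.succ ^ m i.succ).prod *
          (List.ofFn fun i : Fin d => u i.succ ^ m' i.succ).prod) from key]
    have hcm := QQ_comm u hcomm (m' 0) (fun i => m i.succ)
    simp only [QQ] at hcm
    rw [mul_assoc, mul_assoc, ← mul_assoc (u 0 ^ m' 0), hcm.eq]
    group

private lemma QQ_zero {G : Type*} [Group G] {d : ℕ} (u : Fin d → G) : QQ u 0 = 1 := by
  simp [QQ]

private lemma QQ_neg {G : Type*} [Group G] {d : ℕ} (u : Fin d → G)
    (hcomm : ∀ i j, Commute (u i) (u j)) (m : Fin d → ℤ) :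
    QQ u (-m) = (QQ u m)⁻¹ := by
  have := QQ_add u hcomm m (-m)
  simp only [add_neg_cancel, QQ_zero] at this
  exact eq_inv_of_mul_eq_one_right this.symm

private lemma QQ_nat {G : Type*} [Group G] {d : ℕ} (u : Fin d → G) (n : Fin d → ℕ) :
    QQ u (fun i => (n i : ℤ)) = (List.ofFn fun i => u i ^ n i).prod := by
  simp [QQ, zpow_natCast]

private lemma card4 (a b c e : ℤ) : ({a, b, c, e} : Finset ℤ).card ≤ 4 := by
  have h1 := Finset.card_insert_le a ({b, c, e} : Finset ℤ)
  have h2 := Finset.card_insert_le b ({c, e} : Finset ℤ)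
  have h3 := Finset.card_insert_le c ({e} : Finset ℤ)
  have h4 : ({e} : Finset ℤ).card = 1 := Finset.card_singleton e
  omega

/-- A symmetrised multidimensional geometric progression on commuting
generators is a `4^d`-approximate group. -/
theorem stmt_6 {G : Type*} [Group G] (d : ℕ) (u : Fin d → G)
    (hcomm : ∀ i j, Commute (u i) (u j)) (N : Fin d → ℕ)
    (hN : ∀ i, 0 < N i) :
    let P : Set G := {x | ∃ n : Fin d → ℕ, (∀ i, n i < N i) ∧
      x = (List.ofFn fun i => u i ^ n i).prod}
    let A : Set G := P ∪ P⁻¹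
    A⁻¹ = A ∧ (1 : G) ∈ A ∧
      ∃ X : Set G, X.Finite ∧ X.ncard ≤ 4 ^ d ∧ A * A ⊆ X * A := by
  intro P A
  classical
  refine ⟨?_, ?_, ?_⟩
  · show (P ∪ P⁻¹)⁻¹ = P ∪ P⁻¹
    rw [Set.union_inv, inv_inv, Set.union_comm]
  · exact Or.inl ⟨fun _ => 0, fun i => hN i, by simp⟩
  · -- every element of A is QQ u m with bounded exponents
    have hA : ∀ g ∈ A, ∃ m : Fin d → ℤ,
        (∀ i, -(N i : ℤ) + 1 ≤ m i ∧ m i ≤ (N i : ℤ) - 1) ∧ g = QQ u m := by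
      rintro g (⟨n, hn, rfl⟩ | hg)
      · refine ⟨fun i => (n i : ℤ), fun i => ?_, (QQ_nat u n).symm⟩
        show -(N i : ℤ) + 1 ≤ (n i : ℤ) ∧ (n i : ℤ) ≤ (N i : ℤ) - 1
        have := hn i
        have := hN i
        omega
      · obtain ⟨n, hn, hgn⟩ := hg
        refine ⟨fun i => -(n i : ℤ), fun i => ?_, ?_⟩
        · show -(N i : ℤ) + 1 ≤ -(n i : ℤ) ∧ -(n i : ℤ) ≤ (N i : ℤ) - 1
          have := hn i
          have := hN i
          omega
        · have : g⁻¹ = QQ u (fun i => (n i : ℤ)) := by rw [hgn, QQ_nat]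
          rw [show (fun i => -(n i : ℤ)) = -(fun i => (n i : ℤ)) from rfl,
            QQ_neg u hcomm, ← this, inv_inv]
    set Xi : Fin d → Finset ℤ := fun i =>
      {-2 * ((N i : ℤ) - 1), -((N i : ℤ) - 1), 0, (N i : ℤ) - 1} with hXi
    refine ⟨↑((Fintype.piFinset Xi).image (QQ u)), Finset.finite_toSet _, ?_, ?_⟩
    · rw [Set.ncard_coe_finset]
      calc ((Fintype.piFinset Xi).image (QQ u)).card
          ≤ (Fintype.piFinset Xi).card := Finset.card_image_le
        _ = ∏ i, (Xi i).card := Fintype.card_piFinset Xi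
        _ ≤ ∏ _i : Fin d, 4 := Finset.prod_le_prod' fun i _ => card4 _ _ _ _
        _ = 4 ^ d := by simp
    · rintro a ⟨g, hg, h, hh, rfl⟩
      obtain ⟨m, hm, rfl⟩ := hA g hg
      obtain ⟨m', hm', rfl⟩ := hA h hh
      set x : Fin d → ℤ := fun i =>
        if m i + m' i < -((N i : ℤ) - 1) then -2 * ((N i : ℤ) - 1)
        else if m i + m' i < 0 then -((N i : ℤ) - 1)
        else if m i + m' i < (N i : ℤ) then 0
        else (N i : ℤ) - 1 with hxdef
      set r : Fin d → ℤ := fun i => m i + m' i - x i with hrdef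
      have hr : ∀ i, 0 ≤ r i ∧ r i < (N i : ℤ) := by
        intro i
        have h1 := hm i
        have h2 := hm' i
        have h3 := hN i
        simp only [hrdef, hxdef]
        split_ifs <;> omega
      have hxmem : ∀ i, x i ∈ Xi i := by
        intro i
        simp only [hxdef, hXi]
        split_ifs <;> simp
      have key : QQ u m * QQ u m' = QQ u x * QQ u r := by
        rw [← QQ_add u hcomm, ← QQ_add u hcomm]
        congr 1
        funext i
        simp only [Pi.add_apply, hrdef]
        ring
      show QQ u m * QQ u m' ∈ _
      rw [key]
      refine Set.mul_mem_mul ?_ ?_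
      · exact Finset.mem_coe.mpr (Finset.mem_image_of_mem _
          (Fintype.mem_piFinset.mpr hxmem))
      · refine Or.inl ⟨fun i => (r i).toNat, fun i => ?_, ?_⟩
        · show (r i).toNat < N i
          have := hr i; omega
        · rw [← QQ_nat u]
          congr 1
          funext i
          exact (Int.toNat_of_nonneg (hr i).1).symm
end

section
/- Let N ≥ 1 and let ε₁, …, ε_N ∈ {0,1} be arbitrary. Define A = {0} ∪ ⋃_{j=1}^{N} {2j − ε_j, −2j + ε_j} ⊆ ℤ. Then A is a symmetric set containing 0 and A + A ⊆ X + A where X = {−2N, 0, 2N} + {−1, 0, 1}, a set of size at most 9; in particular A is a 9-approximate group. -/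
open Pointwise

/-- The random-signs example: `A = {0} ∪ ⋃_{j=1}^N {2j-ε_j, -2j+ε_j}` is a
symmetric set containing `0`, and `A + A ⊆ X + A` where
`X = {-2N,0,2N} + {-1,0,1}` has at most 9 elements. -/
theorem stmt_11 (N : ℕ) (hN : 1 ≤ N) (ε : ℕ → ℤ)
    (hε : ∀ j, ε j = 0 ∨ ε j = 1) :
    let A : Set ℤ := {0} ∪ ⋃ j ∈ Set.Icc 1 N,
      ({2 * (j : ℤ) - ε j, -(2 * (j : ℤ)) + ε j} : Set ℤ)
    let X : Set ℤ := ({-(2 * (N : ℤ)), 0, 2 * (N : ℤ)} : Set ℤ) +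
      ({-1, 0, 1} : Set ℤ)
    (-A = A) ∧ (0 : ℤ) ∈ A ∧ X.ncard ≤ 9 ∧ A + A ⊆ X + A := by
  intro A X
  have hmem : ∀ x : ℤ, x ∈ A ↔ x = 0 ∨ ∃ j : ℕ, 1 ≤ j ∧ j ≤ N ∧
      (x = 2 * (j : ℤ) - ε j ∨ x = -(2 * (j : ℤ)) + ε j) := by
    intro x
    simp only [A, Set.mem_union, Set.mem_singleton_iff, Set.mem_iUnion,
      Set.mem_insert_iff, Set.mem_Icc, exists_prop]
    constructor
    · rintro (h | ⟨j, ⟨h1, h2⟩, h⟩)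
      · exact Or.inl h
      · exact Or.inr ⟨j, h1, h2, h⟩
    · rintro (h | ⟨j, h1, h2, h⟩)
      · exact Or.inl h
      · exact Or.inr ⟨j, ⟨h1, h2⟩, h⟩
  have hbound : ∀ x ∈ A, -(2 * (N : ℤ)) ≤ x ∧ x ≤ 2 * N := by
    intro x hx
    rw [hmem] at hx
    rcases hx with rfl | ⟨j, h1, h2, h⟩
    · omega
    · rcases hε j with h' | h' <;> omega
  have hcover : ∀ m : ℤ, -(2 * (N : ℤ)) ≤ m → m ≤ 2 * N →
      m ∈ ({-1, 0, 1} : Set ℤ) + A := by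
    intro m h1 h2
    rcases lt_trichotomy m 0 with hneg | rfl | hpos
    · set j : ℕ := ((-m).toNat + 1) / 2 with hj
      have hj' : 1 ≤ j ∧ j ≤ N ∧ 2 * (j : ℤ) - 1 ≤ -m ∧ -m ≤ 2 * (j : ℤ) := by
        omega
      refine ⟨m - (-(2 * (j : ℤ)) + ε j), ?_, -(2 * (j : ℤ)) + ε j, ?_, by ring⟩
      · simp only [Set.mem_insert_iff, Set.mem_singleton_iff]
        rcases hε j with h' | h' <;> omega
      · exact (hmem _).2 (Or.inr ⟨j, hj'.1, hj'.2.1, Or.inr rfl⟩)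
    · exact ⟨0, by simp, 0, (hmem 0).2 (Or.inl rfl), by simp⟩
    · set j : ℕ := (m.toNat + 1) / 2 with hj
      have hj' : 1 ≤ j ∧ j ≤ N ∧ 2 * (j : ℤ) - 1 ≤ m ∧ m ≤ 2 * (j : ℤ) := by
        omega
      refine ⟨m - (2 * (j : ℤ) - ε j), ?_, 2 * (j : ℤ) - ε j, ?_, by ring⟩
      · simp only [Set.mem_insert_iff, Set.mem_singleton_iff]
        rcases hε j with h' | h' <;> omega
      · exact (hmem _).2 (Or.inr ⟨j, hj'.1, hj'.2.1, Or.inl rfl⟩)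
  refine ⟨?_, (hmem 0).2 (Or.inl rfl), ?_, ?_⟩
  · ext x
    rw [Set.mem_neg, hmem, hmem]
    constructor <;> rintro (h | ⟨j, h1, h2, h⟩) <;>
      first
        | exact Or.inl (by omega)
        | exact Or.inr ⟨j, h1, h2, by omega⟩
  · have hX : X = ↑(({-(2 * (N : ℤ)), 0, 2 * (N : ℤ)} : Finset ℤ) +
        ({-1, 0, 1} : Finset ℤ)) := by
      simp [X, Finset.coe_add]
    rw [hX, Set.ncard_coe_finset]
    calc (({-(2 * (N : ℤ)), 0, 2 * (N : ℤ)} : Finset ℤ) +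
        ({-1, 0, 1} : Finset ℤ)).card
        ≤ (({-(2 * (N : ℤ)), 0, 2 * (N : ℤ)} : Finset ℤ)).card *
          (({-1, 0, 1} : Finset ℤ)).card := Finset.card_add_le
      _ ≤ 9 := by
          have h1 := Finset.card_insert_le (-(2 * (N : ℤ)))
            ({0, 2 * (N : ℤ)} : Finset ℤ)
          have h2 := Finset.card_insert_le (0 : ℤ) ({2 * (N : ℤ)} : Finset ℤ)
          have h3 := Finset.card_insert_le (-1 : ℤ) ({0, 1} : Finset ℤ)
          have h4 := Finset.card_insert_le (0 : ℤ) ({1} : Finset ℤ)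
          simp only [Finset.card_singleton] at *
          calc _ ≤ 3 * 3 := Nat.mul_le_mul (by omega) (by omega)
            _ = 9 := rfl
  · rintro z hz
    obtain ⟨a, ha, b, hb, rfl⟩ := Set.mem_add.1 hz
    obtain ⟨ha1, ha2⟩ := hbound a ha
    obtain ⟨hb1, hb2⟩ := hbound b hb
    obtain ⟨c, hc, hc1, hc2⟩ : ∃ c : ℤ,
        (c = -(2 * (N : ℤ)) ∨ c = 0 ∨ c = 2 * (N : ℤ)) ∧
        -(2 * (N : ℤ)) ≤ a + b - c ∧ a + b - c ≤ 2 * N := by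
      rcases lt_or_ge (a + b) (-(2 * (N : ℤ))) with h | h
      · exact ⟨-(2 * (N : ℤ)), Or.inl rfl, by omega, by omega⟩
      rcases lt_or_ge (2 * (N : ℤ)) (a + b) with h' | h'
      · exact ⟨2 * (N : ℤ), Or.inr (Or.inr rfl), by omega, by omega⟩
      · exact ⟨0, Or.inr (Or.inl rfl), by omega, by omega⟩
    obtain ⟨d, hd, e, he, hde⟩ := Set.mem_add.1 (hcover (a + b - c) hc1 hc2)
    refine Set.mem_add.2 ⟨c + d, Set.mem_add.2 ⟨c, ?_, d, hd, rfl⟩, e, he, by omega⟩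
    simp only [Set.mem_insert_iff, Set.mem_singleton_iff]
    tauto
end

section
/- Let V be a finite-dimensional vector space over 𝔽₂ and let φ : V → 𝔽₂ be a function such that the cube condition ∑_{ω ∈ {0,1}³} φ(x + ω₁h₁ + ω₂h₂ + ω₃h₃) = 0 holds for all x, h₁, h₂, h₃ ∈ V (sum in 𝔽₂). Then φ is a polynomial of degree at most 2, i.e., φ(x) = Q(x) + L(x) + c where Q is a quadratic form, L is linear, and c is constant. -/
/-- A function `V → 𝔽₂` whose third derivatives all vanish is a polynomial
of degree at most two: a quadratic form plus a linear form plus a constant. -/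
theorem stmt_14 {V : Type*} [AddCommGroup V] [Module (ZMod 2) V]
    [Module.Finite (ZMod 2) V] (φ : V → ZMod 2)
    (hcube : ∀ x h₁ h₂ h₃ : V,
      φ x + φ (x + h₁) + φ (x + h₂) + φ (x + h₃) +
        φ (x + h₁ + h₂) + φ (x + h₁ + h₃) + φ (x + h₂ + h₃) +
        φ (x + h₁ + h₂ + h₃) = 0) :
    ∃ (Q : QuadraticForm (ZMod 2) V) (L : V →ₗ[ZMod 2] ZMod 2) (c : ZMod 2),
      ∀ x, φ x = Q x + L x + c := by
  have key : ∀ a b c : V,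
      φ 0 + φ a + φ b + φ c + φ (a + b) + φ (a + c) + φ (b + c)
        + φ (a + b + c) = 0 := by
    intro a b c
    have h := hcube 0 a b c
    simpa only [zero_add] using h
  set Bf : V → V → ZMod 2 := fun h k => φ (h + k) + φ h + φ k + φ 0 with hBf
  have hsymm : ∀ h k, Bf h k = Bf k h := by
    intro h k; simp only [hBf]; rw [add_comm k h]; ring
  have hadd : ∀ x y z : V, Bf (x + y) z = Bf x z + Bf y z := by
    intro x y z
    have h := key x y z
    simp only [hBf]
    generalize φ (x + y + z) = p₁ at h ⊢
    generalize φ (x + y) = p₂ at h ⊢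
    generalize φ (x + z) = p₃ at h ⊢
    generalize φ (y + z) = p₄ at h ⊢
    generalize φ x = p₅ at h ⊢
    generalize φ y = p₆ at h ⊢
    generalize φ z = p₇ at h ⊢
    generalize φ 0 = p₈ at h ⊢
    revert h p₁ p₂ p₃ p₄ p₅ p₆ p₇ p₈
    decide
  have hzero : ∀ z : V, Bf 0 z = 0 := by
    intro z
    simp only [hBf, zero_add]
    generalize φ z = p; generalize φ 0 = q
    revert p q; decide
  have hsmul : ∀ (a : ZMod 2) (x z : V), Bf (a • x) z = a • Bf x z := by
    intro a x z
    have ha : a = 0 ∨ a = 1 := by revert a; decide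
    rcases ha with rfl | rfl
    · simp [hzero]
    · simp
  let B : V →ₗ[ZMod 2] V →ₗ[ZMod 2] ZMod 2 :=
    LinearMap.mk₂ (ZMod 2) Bf hadd hsmul
      (fun x y z => by rw [hsymm, hadd, hsymm x y, hsymm x z])
      (fun a x z => by rw [hsymm, hsmul, hsymm])
  refine ⟨{ toFun := fun x => φ x + φ 0,
            toFun_smul := ?_,
            exists_companion' := ⟨B, ?_⟩ }, 0, φ 0, ?_⟩
  · intro a x
    have ha : a = 0 ∨ a = 1 := by revert a; decide
    rcases ha with rfl | rfl
    · show φ ((0:ZMod 2) • x) + φ 0 = ((0:ZMod 2) * 0) • (φ x + φ 0)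
      rw [zero_smul]
      generalize φ x = p; generalize φ (0:V) = q
      revert p q; decide
    · show φ ((1:ZMod 2) • x) + φ 0 = ((1:ZMod 2) * 1) • (φ x + φ 0)
      simp
  · intro x y
    show φ (x + y) + φ 0 = (φ x + φ 0) + (φ y + φ 0) + (φ (x + y) + φ x + φ y + φ 0)
    generalize φ (x + y) = p; generalize φ x = q; generalize φ y = r
    generalize φ 0 = s; revert p q r s; decide
  · intro x
    show φ x = (φ x + φ 0) + 0 + φ 0
    generalize φ x = p; generalize φ 0 = q; revert p q; decide
end
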